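/- Let 𝒮 be finite, let μ be the joint probability mass function of random variables Z_𝒮 = {Z_s}_{s∈𝒮} on finite alphabets, and for 𝒮' ⊆ 𝒮 let μ_{𝒮'} denote the marginal of μ on the coordinates 𝒮' (with μ_∅ ≡ 1). Then the following are equivalent: (i) for every ℐ' ∈ 𝔍, setting C = 𝒮(ℐ'), B = (⋂_{i∈ℐ'} 𝒮(i)) ∩ 𝒮(ℐ')^∁ and A = (⋂_{i∈ℐ'} 𝒮(i))^∁ ∩ (⋃_{ℐ''∈𝔍 : ℐ''⊆ℐ'} 𝒮(ℐ''))^∁, the Markov chain Z_A ↔ Z_B ↔ Z_C holds, i.e. μ_{A∪B∪C}(z_A, z_B, z_C) · μ_B(z_B) = μ_{A∪B}(z_A, z_B) · μ_{B∪C}(z_B, z_C) for all z; (ii) μ factorizes according to the access structure, i.e. μ(z_𝒮) · ∏_{ℐ'∈𝔍} μ_{S̊(ℐ')}(z_{S̊(ℐ')}) = ∏_{ℐ'∈𝔍} μ_{𝒮(ℐ')∪S̊(ℐ')}(z_{𝒮(ℐ')∪S̊(ℐ')}) for all z_𝒮. -/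

import Mathlib

attribute [local instance] Classical.propDecidable

open Finset

noncomputable section

/-- ℐ(s) = {i ∈ ℐ : (s,i) ∈ 𝒜}. -/
def IofF {S I : Type*} [Fintype I] (A : Finset (S × I)) (s : S) : Finset I :=
  Finset.univ.filter (fun i => (s, i) ∈ A)

/-- 𝒮(i) = {s ∈ 𝒮 : (s,i) ∈ 𝒜}. -/
def SofIdx {S I : Type*} [Fintype S] (A : Finset (S × I)) (i : I) : Finset S :=
  Finset.univ.filter (fun s => (s, i) ∈ A)

/-- 𝒮(ℐ') = {s ∈ 𝒮 : ℐ(s) = ℐ'}. -/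
def SofJ {S I : Type*} [Fintype S] [Fintype I] (A : Finset (S × I)) (J : Finset I) :
    Finset S :=
  Finset.univ.filter (fun s => IofF A s = J)

/-- 𝔍 = {ℐ' ⊆ ℐ : 𝒮(ℐ') ≠ ∅}. -/
def frak {S I : Type*} [Fintype S] [Fintype I] (A : Finset (S × I)) :
    Finset (Finset I) :=
  Finset.univ.filter (fun J => (SofJ A J).Nonempty)

/-- S̊(ℐ') = ⋃ of 𝒮(ℐ'') over ℐ'' ∈ 𝔍 with ℐ'' ⊋ ℐ'. -/
def Sring {S I : Type*} [Fintype S] [Fintype I] (A : Finset (S × I)) (J : Finset I) :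
    Finset S :=
  ((frak A).filter (fun J' => J ⊂ J')).biUnion (SofJ A)

/-- B = (⋂_{i∈ℐ'} 𝒮(i)) ∩ 𝒮(ℐ')^∁, the index set of the public sources. -/
def Bset {S I : Type*} [Fintype S] [Fintype I] [DecidableEq S] (A : Finset (S × I))
    (J : Finset I) : Finset S :=
  (J.inf (SofIdx A)) ∩ (SofJ A J)ᶜ

/-- A = (⋂_{i∈ℐ'} 𝒮(i))^∁ ∩ (⋃_{ℐ''∈𝔍 : ℐ''⊆ℐ'} 𝒮(ℐ''))^∁, the index set of the
irrelevant sources. -/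
def Aset {S I : Type*} [Fintype S] [Fintype I] [DecidableEq S] (A : Finset (S × I))
    (J : Finset I) : Finset S :=
  (J.inf (SofIdx A))ᶜ ∩ (((frak A).filter (fun J'' => J'' ⊆ J)).biUnion (SofJ A))ᶜ

/-- Marginal of the pmf μ on the coordinates of 𝒮' (as a function of the full tuple;
`marg μ ∅ z = 1` when μ is a pmf). -/
def marg {S : Type*} [Fintype S] {Z : S → Type*} [∀ s, Fintype (Z s)] [DecidableEq S]
    (μ : (∀ s, Z s) → ℝ) (S' : Finset S) (z : ∀ s, Z s) : ℝ :=
  ∑ w ∈ Finset.univ.filter (fun w : ∀ s, Z s => ∀ s ∈ S', w s = z s), μ w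

end


noncomputable section Aux8

open Finset

variable {S I : Type*} [Fintype S] [Fintype I] [DecidableEq S] [DecidableEq I]
  {Z : S → Type*} [∀ s, Fintype (Z s)]

/-- Assignments agreeing with `z` on `E`. -/
def Agr (E : Finset S) (z : ∀ s, Z s) : Finset (∀ s, Z s) :=
  Finset.univ.filter (fun w : ∀ s, Z s => ∀ s ∈ E, w s = z s)

lemma mem_Agr {E : Finset S} {z w : ∀ s, Z s} : w ∈ Agr E z ↔ ∀ s ∈ E, w s = z s := by
  simp [Agr]

lemma marg_def (μ : (∀ s, Z s) → ℝ) (S' : Finset S) (z : ∀ s, Z s) :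
    marg μ S' z = ∑ w ∈ Agr S' z, μ w := rfl

lemma Agr_empty (z : ∀ s, Z s) : Agr (∅ : Finset S) z = Finset.univ := by
  ext w; simp [Agr]

lemma Agr_univ (z : ∀ s, Z s) : Agr (Finset.univ : Finset S) z = {z} := by
  ext w; simp [Agr, funext_iff]

variable {μ : (∀ s, Z s) → ℝ}

lemma marg_nonneg (hμ0 : ∀ z, 0 ≤ μ z) (S' : Finset S) (z : ∀ s, Z s) :
    0 ≤ marg μ S' z :=
  Finset.sum_nonneg fun w _ => hμ0 w

lemma marg_mono (hμ0 : ∀ z, 0 ≤ μ z) {S₁ S₂ : Finset S} (h : S₁ ⊆ S₂) (z : ∀ s, Z s) :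
    marg μ S₂ z ≤ marg μ S₁ z := by
  rw [marg_def, marg_def]
  refine Finset.sum_le_sum_of_subset_of_nonneg (fun w hw => ?_) (fun w _ _ => hμ0 w)
  rw [mem_Agr] at hw ⊢
  exact fun s hs => hw s (h hs)

lemma le_marg (hμ0 : ∀ z, 0 ≤ μ z) (S' : Finset S) (z : ∀ s, Z s) :
    μ z ≤ marg μ S' z := by
  rw [marg_def]
  exact Finset.single_le_sum (fun w _ => hμ0 w) (mem_Agr.2 fun s _ => rfl)

lemma marg_empty (hμ1 : ∑ z, μ z = 1) (z : ∀ s, Z s) : marg μ (∅ : Finset S) z = 1 := by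
  rw [marg_def, Agr_empty, hμ1]

lemma marg_univ (μ : (∀ s, Z s) → ℝ) (z : ∀ s, Z s) :
    marg μ (Finset.univ : Finset S) z = μ z := by
  rw [marg_def, Agr_univ, Finset.sum_singleton]

lemma marg_congr {S' : Finset S} {w z : ∀ s, Z s} (h : ∀ s ∈ S', w s = z s) :
    marg μ S' w = marg μ S' z := by
  rw [marg_def, marg_def]
  refine Finset.sum_congr ?_ fun _ _ => rfl
  ext v
  rw [mem_Agr, mem_Agr]
  exact ⟨fun hv s hs => (hv s hs).trans (h s hs), fun hv s hs => (hv s hs).trans (h s hs).symm⟩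

lemma sum_Agr_marg (μ : (∀ s, Z s) → ℝ) {E E' : Finset S} (hU : E ∪ E' = Finset.univ)
    (z : ∀ s, Z s) :
    ∑ w ∈ Agr E z, marg μ E' w = marg μ (E ∩ E') z := by
  have key : ∀ v : ∀ s, Z s,
      ∑ w ∈ Agr E z, (if ∀ s ∈ E', v s = w s then μ v else 0)
        = if ∀ s ∈ E ∩ E', v s = z s then μ v else 0 := by
    intro v
    by_cases hv : ∀ s ∈ E ∩ E', v s = z s
    · rw [if_pos hv]
      have hset : (Agr E z).filter (fun w => ∀ s ∈ E', v s = w s)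
          = {fun s => if s ∈ E then z s else v s} := by
        ext w
        simp only [Finset.mem_filter, mem_Agr, Finset.mem_singleton]
        constructor
        · rintro ⟨h1, h2⟩
          funext s
          by_cases hs : s ∈ E
          · simp [hs, h1 s hs]
          · have hs' : s ∈ E' := by
              have hu := Finset.mem_univ s
              rw [← hU, Finset.mem_union] at hu
              tauto
            simp [hs, (h2 s hs').symm]
        · rintro rfl
          refine ⟨fun s hs => by simp [hs], fun s hs => ?_⟩
          by_cases hsE : s ∈ E
          · simp only [hsE, if_pos]
            exact hv s (Finset.mem_inter.2 ⟨hsE, hs⟩)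
          · simp [hsE]
      rw [← Finset.sum_filter, hset, Finset.sum_singleton]
    · rw [if_neg hv, ← Finset.sum_filter]
      have hset : (Agr E z).filter (fun w => ∀ s ∈ E', v s = w s) = ∅ := by
        rw [Finset.filter_eq_empty_iff]
        intro w hw hcontra
        push_neg at hv
        obtain ⟨s, hs, hne⟩ := hv
        rw [Finset.mem_inter] at hs
        exact hne ((hcontra s hs.2).trans (mem_Agr.1 hw s hs.1))
      rw [hset, Finset.sum_empty]
  calc ∑ w ∈ Agr E z, marg μ E' w
      = ∑ w ∈ Agr E z, ∑ v ∈ Finset.univ, (if ∀ s ∈ E', v s = w s then μ v else 0) := by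
        refine Finset.sum_congr rfl fun w _ => ?_
        rw [marg_def, Agr, Finset.sum_filter]
    _ = ∑ v ∈ Finset.univ, ∑ w ∈ Agr E z, (if ∀ s ∈ E', v s = w s then μ v else 0) :=
        Finset.sum_comm
    _ = ∑ v ∈ Finset.univ, (if ∀ s ∈ E ∩ E', v s = z s then μ v else 0) :=
        Finset.sum_congr rfl fun v _ => key v
    _ = marg μ (E ∩ E') z := by rw [marg_def, Agr, Finset.sum_filter]

lemma sum_Agr_split {D E : Finset S} (hDE : Disjoint D E) (f : (∀ s, Z s) → ℝ)
    (z : ∀ s, Z s) :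
    ∑ w ∈ Agr ((D ∪ E)ᶜ) z, f w = ∑ w' ∈ Agr Dᶜ z, ∑ w ∈ Agr Eᶜ w', f w := by
  have hdisj : Set.PairwiseDisjoint ↑(Agr Dᶜ z) (fun w' : ∀ s, Z s => Agr Eᶜ w') := by
    intro w₁ h1 w₂ h2 hne
    rw [Finset.mem_coe, mem_Agr] at h1 h2
    rw [Function.onFun, Finset.disjoint_left]
    intro w hw1 hw2
    apply hne
    funext s
    by_cases hs : s ∈ E
    · have hsD : s ∈ Dᶜ := Finset.mem_compl.2 (Finset.disjoint_right.1 hDE hs)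
      rw [h1 s hsD, h2 s hsD]
    · have hs' : s ∈ Eᶜ := Finset.mem_compl.2 hs
      rw [← mem_Agr.1 hw1 s hs', ← mem_Agr.1 hw2 s hs']
  have hset : Agr ((D ∪ E)ᶜ) z = (Agr Dᶜ z).biUnion (fun w' => Agr Eᶜ w') := by
    ext w
    simp only [Finset.mem_biUnion, mem_Agr]
    constructor
    · intro hw
      refine ⟨fun s => if s ∈ E then z s else w s, fun s hs => ?_, fun s hs => ?_⟩
      · rw [Finset.mem_compl] at hs
        by_cases hsE : s ∈ E
        · simp [hsE]
        · simp only [hsE, if_neg, ite_false]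
          exact hw s (by simp [Finset.mem_compl, Finset.mem_union, hs, hsE])
      · rw [Finset.mem_compl] at hs
        simp [hs]
    · rintro ⟨w', hw', hw⟩ s hs
      rw [Finset.mem_compl, Finset.mem_union] at hs
      push_neg at hs
      rw [hw s (Finset.mem_compl.2 hs.2), hw' s (Finset.mem_compl.2 hs.1)]
  rw [hset, Finset.sum_biUnion hdisj]

/-! ### Combinatorics of the access structure -/

def Tset (A : Finset (S × I)) (𝒦 : Finset (Finset I)) : Finset S :=
  𝒦.biUnion (SofJ A)

lemma mem_IofF {A : Finset (S × I)} {s : S} {i : I} : i ∈ IofF A s ↔ (s, i) ∈ A := by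
  simp [IofF]

lemma mem_SofIdx {A : Finset (S × I)} {s : S} {i : I} : s ∈ SofIdx A i ↔ (s, i) ∈ A := by
  simp [SofIdx]

lemma mem_SofJ {A : Finset (S × I)} {J : Finset I} {s : S} :
    s ∈ SofJ A J ↔ IofF A s = J := by
  simp [SofJ]

lemma IofF_mem_frak (A : Finset (S × I)) (s : S) : IofF A s ∈ frak A := by
  simp only [frak, Finset.mem_filter, Finset.mem_univ, true_and]
  exact ⟨s, mem_SofJ.2 rfl⟩

lemma mem_Tset {A : Finset (S × I)} {𝒦 : Finset (Finset I)} {s : S} :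
    s ∈ Tset A 𝒦 ↔ IofF A s ∈ 𝒦 := by
  simp only [Tset, Finset.mem_biUnion, mem_SofJ]
  constructor
  · rintro ⟨J, hJ, rfl⟩; exact hJ
  · intro h; exact ⟨_, h, rfl⟩

lemma mem_Sring {A : Finset (S × I)} {J : Finset I} {s : S} :
    s ∈ Sring A J ↔ J ⊂ IofF A s := by
  simp only [Sring, Finset.mem_biUnion, Finset.mem_filter, mem_SofJ]
  constructor
  · rintro ⟨J', ⟨_, h⟩, rfl⟩; exact h
  · intro h; exact ⟨_, ⟨IofF_mem_frak A s, h⟩, rfl⟩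

lemma mem_infS {A : Finset (S × I)} {K : Finset I} {s : S} :
    s ∈ K.inf (SofIdx A) ↔ K ⊆ IofF A s := by
  simp only [Finset.mem_inf, mem_SofIdx, Finset.subset_iff, mem_IofF]

lemma Bset_eq (A : Finset (S × I)) (K : Finset I) : Bset A K = Sring A K := by
  ext s
  rw [Bset, Finset.mem_inter, Finset.mem_compl, mem_infS, mem_SofJ, mem_Sring,
    Finset.ssubset_iff_subset_ne]
  constructor
  · rintro ⟨h1, h2⟩; exact ⟨h1, fun h => h2 h.symm⟩
  · rintro ⟨h1, h2⟩; exact ⟨h1, fun h => h2 h.symm⟩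

lemma ABset_eq (A : Finset (S × I)) (K : Finset I) :
    Aset A K ∪ Bset A K = Tset A ((frak A).filter (fun J => ¬ J ⊆ K)) := by
  ext s
  rw [Finset.mem_union, Bset_eq]
  simp only [Aset, Finset.mem_inter, Finset.mem_compl, mem_infS, mem_Sring,
    Finset.mem_biUnion, Finset.mem_filter, mem_SofJ, mem_Tset]
  have hf := IofF_mem_frak A s
  rw [ssubset_iff_subset_not_subset]
  constructor
  · rintro (⟨h1, h2⟩ | ⟨h1, h2⟩)
    · exact ⟨hf, fun hc => h2 ⟨_, ⟨hf, hc⟩, rfl⟩⟩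
    · exact ⟨hf, h2⟩
  · rintro ⟨-, h2⟩
    by_cases hK : K ⊆ IofF A s
    · exact Or.inr ⟨hK, h2⟩
    · refine Or.inl ⟨hK, ?_⟩
      rintro ⟨J, ⟨-, hJK⟩, hEq⟩
      exact h2 (by rw [hEq]; exact hJK)

lemma ABCset_eq (A : Finset (S × I)) (K : Finset I) :
    Aset A K ∪ Bset A K ∪ SofJ A K = Tset A ((frak A).filter (fun J => ¬ J ⊂ K)) := by
  ext s
  rw [Finset.mem_union, ABset_eq, mem_Tset, mem_Tset, mem_SofJ, Finset.mem_filter,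
    Finset.mem_filter]
  have hf := IofF_mem_frak A s
  rw [ssubset_iff_subset_not_subset]
  rw [show (IofF A s = K) ↔ (IofF A s ⊆ K ∧ K ⊆ IofF A s) from Finset.Subset.antisymm_iff]
  tauto

lemma Tset_frak (A : Finset (S × I)) : Tset A (frak A) = Finset.univ := by
  ext s
  simp [mem_Tset, IofF_mem_frak]

/-- Up-closed families of `𝔍`. -/
def UpC (A : Finset (S × I)) (𝒦 : Finset (Finset I)) : Prop :=
  𝒦 ⊆ frak A ∧ ∀ J ∈ 𝒦, ∀ J' ∈ frak A, J ⊂ J' → J' ∈ 𝒦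

lemma Sring_subset_Tset {A : Finset (S × I)} {𝒦 : Finset (Finset I)} (hU : UpC A 𝒦)
    {K : Finset I} (hK : K ∈ 𝒦) : Sring A K ⊆ Tset A 𝒦 := fun s hs => by
  rw [mem_Sring] at hs
  rw [mem_Tset]
  exact hU.2 K hK _ (IofF_mem_frak A s) hs

lemma sum_Agr_margT (A : Finset (S × I)) (μ : (∀ s, Z s) → ℝ)
    {𝒦 ℳ : Finset (Finset I)} (h : 𝒦 ⊆ ℳ) (z : ∀ s, Z s) :
    ∑ w ∈ Agr (Tset A (ℳ \ 𝒦))ᶜ z, marg μ (Tset A ℳ) w = marg μ (Tset A 𝒦) z := by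
  have h1 : (Tset A (ℳ \ 𝒦))ᶜ ∪ Tset A ℳ = Finset.univ := by
    ext s
    simp only [Finset.mem_union, Finset.mem_compl, mem_Tset, Finset.mem_sdiff,
      Finset.mem_univ, iff_true]
    tauto
  have h2 : (Tset A (ℳ \ 𝒦))ᶜ ∩ Tset A ℳ = Tset A 𝒦 := by
    ext s
    simp only [Finset.mem_inter, Finset.mem_compl, mem_Tset, Finset.mem_sdiff]
    constructor
    · rintro ⟨hn, hm⟩
      by_contra hk
      exact hn ⟨hm, hk⟩
    · intro hk
      exact ⟨fun hc => hc.2 hk, h hk⟩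
  rw [sum_Agr_marg μ h1 z, h2]

/-! ### Direction (i) → (ii) -/

lemma markov_step {A : Finset (S × I)} {μ : (∀ s, Z s) → ℝ}
    (hM : ∀ J ∈ frak A, ∀ z : ∀ s, Z s,
        marg μ (Aset A J ∪ Bset A J ∪ SofJ A J) z * marg μ (Bset A J) z
          = marg μ (Aset A J ∪ Bset A J) z * marg μ (Bset A J ∪ SofJ A J) z)
    {𝒦 : Finset (Finset I)} (hU : UpC A 𝒦) {K : Finset I} (hK : K ∈ 𝒦)
    (hmin : ∀ J ∈ 𝒦, ¬ J ⊂ K) (z : ∀ s, Z s) :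
    marg μ (Tset A 𝒦) z * marg μ (Sring A K) z
      = marg μ (Tset A (𝒦.erase K)) z * marg μ (SofJ A K ∪ Sring A K) z := by
  have hKfrak : K ∈ frak A := hU.1 hK
  set 𝒦₁ : Finset (Finset I) := (frak A).filter (fun J => ¬ J ⊆ K) with h𝒦₁
  set 𝒦₂ : Finset (Finset I) := (frak A).filter (fun J => ¬ J ⊂ K) with h𝒦₂
  have hsub1 : 𝒦.erase K ⊆ 𝒦₁ := by
    intro J hJ
    rw [Finset.mem_erase] at hJ
    rw [h𝒦₁, Finset.mem_filter]
    refine ⟨hU.1 hJ.2, fun hc => ?_⟩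
    exact hmin J hJ.2 (Finset.ssubset_iff_subset_ne.2 ⟨hc, hJ.1⟩)
  have hsub2 : 𝒦 ⊆ 𝒦₂ := by
    intro J hJ
    rw [h𝒦₂, Finset.mem_filter]
    exact ⟨hU.1 hJ, hmin J hJ⟩
  have hDD : 𝒦₂ \ 𝒦 = 𝒦₁ \ 𝒦.erase K := by
    ext J
    simp only [Finset.mem_sdiff, h𝒦₁, h𝒦₂, Finset.mem_filter, Finset.mem_erase]
    constructor
    · rintro ⟨⟨hf, hns⟩, hnK⟩
      have hnsub : ¬ J ⊆ K := by
        intro hsub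
        by_cases hJK : J = K
        · exact hnK (hJK ▸ hK)
        · exact hns (Finset.ssubset_iff_subset_ne.2 ⟨hsub, hJK⟩)
      exact ⟨⟨hf, hnsub⟩, fun hc => hnK hc.2⟩
    · rintro ⟨⟨hf, hnsub⟩, hne⟩
      refine ⟨⟨hf, fun hc => hnsub hc.subset⟩, fun hc => ?_⟩
      by_cases hJK : J = K
      · exact hnsub (hJK ▸ Finset.Subset.refl K)
      · exact hne ⟨hJK, hc⟩
  have hUKsub : Sring A K ⊆ (Tset A (𝒦₂ \ 𝒦))ᶜ := by
    intro s hs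
    rw [Finset.mem_compl, mem_Tset, Finset.mem_sdiff]
    have := Sring_subset_Tset hU hK hs
    rw [mem_Tset] at this
    tauto
  have hCUsub : SofJ A K ∪ Sring A K ⊆ (Tset A (𝒦₂ \ 𝒦))ᶜ := by
    intro s hs
    rcases Finset.mem_union.1 hs with h | h
    · rw [Finset.mem_compl, mem_Tset, Finset.mem_sdiff]
      rw [mem_SofJ] at h
      rw [h]
      tauto
    · exact hUKsub h
  have hM' : ∀ w, marg μ (Tset A 𝒦₂) w * marg μ (Sring A K) w
      = marg μ (Tset A 𝒦₁) w * marg μ (SofJ A K ∪ Sring A K) w := by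
    intro w
    have h := hM K hKfrak w
    rw [ABCset_eq A K, ABset_eq A K, Bset_eq A K,
      Finset.union_comm (Sring A K) (SofJ A K)] at h
    exact h
  calc marg μ (Tset A 𝒦) z * marg μ (Sring A K) z
      = (∑ w ∈ Agr (Tset A (𝒦₂ \ 𝒦))ᶜ z, marg μ (Tset A 𝒦₂) w) * marg μ (Sring A K) z := by
        rw [sum_Agr_margT A μ hsub2 z]
    _ = ∑ w ∈ Agr (Tset A (𝒦₂ \ 𝒦))ᶜ z, marg μ (Tset A 𝒦₂) w * marg μ (Sring A K) w := by
        rw [Finset.sum_mul]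
        refine Finset.sum_congr rfl fun w hw => ?_
        rw [marg_congr (show ∀ s ∈ Sring A K, w s = z s from
          fun s hs => mem_Agr.1 hw s (hUKsub hs))]
    _ = ∑ w ∈ Agr (Tset A (𝒦₂ \ 𝒦))ᶜ z,
          marg μ (Tset A 𝒦₁) w * marg μ (SofJ A K ∪ Sring A K) w :=
        Finset.sum_congr rfl fun w _ => hM' w
    _ = ∑ w ∈ Agr (Tset A (𝒦₂ \ 𝒦))ᶜ z,
          marg μ (Tset A 𝒦₁) w * marg μ (SofJ A K ∪ Sring A K) z := by
        refine Finset.sum_congr rfl fun w hw => ?_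
        rw [marg_congr (show ∀ s ∈ SofJ A K ∪ Sring A K, w s = z s from
          fun s hs => mem_Agr.1 hw s (hCUsub hs))]
    _ = marg μ (Tset A (𝒦.erase K)) z * marg μ (SofJ A K ∪ Sring A K) z := by
        rw [← Finset.sum_mul]
        congr 1
        have h := sum_Agr_margT A μ hsub1 z
        rw [← hDD] at h
        exact h

lemma markov_imp_fact {A : Finset (S × I)} {μ : (∀ s, Z s) → ℝ}
    (hμ1 : ∑ z, μ z = 1)
    (hM : ∀ J ∈ frak A, ∀ z : ∀ s, Z s,
        marg μ (Aset A J ∪ Bset A J ∪ SofJ A J) z * marg μ (Bset A J) z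
          = marg μ (Aset A J ∪ Bset A J) z * marg μ (Bset A J ∪ SofJ A J) z) :
    ∀ 𝒦 : Finset (Finset I), UpC A 𝒦 → ∀ z : ∀ s, Z s,
      marg μ (Tset A 𝒦) z * ∏ J ∈ 𝒦, marg μ (Sring A J) z
        = ∏ J ∈ 𝒦, marg μ (SofJ A J ∪ Sring A J) z := by
  intro 𝒦
  induction 𝒦 using Finset.strongInduction with
  | _ 𝒦 ih =>
    intro hU z
    rcases Finset.eq_empty_or_nonempty 𝒦 with rfl | hne
    · have hT : Tset A (∅ : Finset (Finset I)) = ∅ := Finset.biUnion_empty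
      rw [hT, marg_empty hμ1, Finset.prod_empty, Finset.prod_empty, one_mul]
    · obtain ⟨K, hmin0⟩ := Finset.exists_minimal hne
      have hK : K ∈ 𝒦 := hmin0.prop
      have hmin : ∀ J ∈ 𝒦, ¬ J ⊂ K := fun J hJ => hmin0.not_lt hJ
      have hU' : UpC A (𝒦.erase K) := by
        refine ⟨(Finset.erase_subset _ _).trans hU.1, ?_⟩
        intro J hJ J' hJ' hss
        rw [Finset.mem_erase] at hJ ⊢
        refine ⟨?_, hU.2 J hJ.2 J' hJ' hss⟩
        rintro rfl
        exact hmin J hJ.2 hss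
      have IH := ih _ (Finset.erase_ssubset hK) hU' z
      rw [← Finset.mul_prod_erase _ _ hK, ← Finset.mul_prod_erase _ _ hK]
      calc marg μ (Tset A 𝒦) z *
            (marg μ (Sring A K) z * ∏ J ∈ 𝒦.erase K, marg μ (Sring A J) z)
          = (marg μ (Tset A 𝒦) z * marg μ (Sring A K) z) *
              ∏ J ∈ 𝒦.erase K, marg μ (Sring A J) z := by ring
        _ = (marg μ (Tset A (𝒦.erase K)) z * marg μ (SofJ A K ∪ Sring A K) z) *
              ∏ J ∈ 𝒦.erase K, marg μ (Sring A J) z := by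
            rw [markov_step hM hU hK hmin z]
        _ = marg μ (SofJ A K ∪ Sring A K) z *
              (marg μ (Tset A (𝒦.erase K)) z * ∏ J ∈ 𝒦.erase K, marg μ (Sring A J) z) := by
            ring
        _ = marg μ (SofJ A K ∪ Sring A K) z *
              ∏ J ∈ 𝒦.erase K, marg μ (SofJ A J ∪ Sring A J) z := by rw [IH]

/-! ### Direction (ii) → (i) -/

/-- The conditional kernel of the sources in `𝒮(K)` given those in `S̊(K)`. -/
def pker (A : Finset (S × I)) (μ : (∀ s, Z s) → ℝ) (K : Finset I) (z : ∀ s, Z s) : ℝ :=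
  if marg μ (Sring A K) z = 0 then marg μ (SofJ A K) z
  else marg μ (SofJ A K ∪ Sring A K) z / marg μ (Sring A K) z

lemma pker_nonneg (hμ0 : ∀ z, 0 ≤ μ z) (A : Finset (S × I)) (K : Finset I)
    (z : ∀ s, Z s) : 0 ≤ pker A μ K z := by
  rw [pker]
  split
  · exact marg_nonneg hμ0 _ _
  · exact div_nonneg (marg_nonneg hμ0 _ _) (marg_nonneg hμ0 _ _)

lemma pker_congr {A : Finset (S × I)} {K : Finset I} {w z : ∀ s, Z s}
    (h : ∀ s ∈ SofJ A K ∪ Sring A K, w s = z s) : pker A μ K w = pker A μ K z := by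
  have h1 : marg μ (Sring A K) w = marg μ (Sring A K) z :=
    marg_congr fun s hs => h s (Finset.mem_union_right _ hs)
  have h2 : marg μ (SofJ A K) w = marg μ (SofJ A K) z :=
    marg_congr fun s hs => h s (Finset.mem_union_left _ hs)
  have h3 : marg μ (SofJ A K ∪ Sring A K) w = marg μ (SofJ A K ∪ Sring A K) z :=
    marg_congr h
  rw [pker, pker, h1, h2, h3]

lemma pker_mul (hμ0 : ∀ z, 0 ≤ μ z) (A : Finset (S × I)) (K : Finset I) (z : ∀ s, Z s) :
    pker A μ K z * marg μ (Sring A K) z = marg μ (SofJ A K ∪ Sring A K) z := by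
  rw [pker]
  split
  · rename_i h
    rw [h, mul_zero]
    have hle : marg μ (SofJ A K ∪ Sring A K) z ≤ marg μ (Sring A K) z :=
      marg_mono hμ0 Finset.subset_union_right z
    have hge : 0 ≤ marg μ (SofJ A K ∪ Sring A K) z := marg_nonneg hμ0 _ _
    linarith
  · rename_i h
    exact div_mul_cancel₀ _ h

lemma not_mem_SofJ_of_mem_Sring {A : Finset (S × I)} {K : Finset I} {s : S}
    (hs : s ∈ Sring A K) : s ∉ SofJ A K := by
  rw [mem_Sring] at hs
  rw [mem_SofJ]
  intro h
  rw [h] at hs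
  exact ssubset_irrefl _ hs

lemma pker_norm (hμ1 : ∑ z, μ z = 1) (A : Finset (S × I)) (K : Finset I)
    (z : ∀ s, Z s) : ∑ w ∈ Agr (SofJ A K)ᶜ z, pker A μ K w = 1 := by
  have hagree : ∀ w ∈ Agr (SofJ A K)ᶜ z, marg μ (Sring A K) w = marg μ (Sring A K) z := by
    intro w hw
    refine marg_congr fun s hs => mem_Agr.1 hw s ?_
    exact Finset.mem_compl.2 (not_mem_SofJ_of_mem_Sring hs)
  by_cases h0 : marg μ (Sring A K) z = 0
  · have hval : ∀ w ∈ Agr (SofJ A K)ᶜ z, pker A μ K w = marg μ (SofJ A K) w := by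
      intro w hw
      rw [pker, if_pos ((hagree w hw).trans h0)]
    rw [Finset.sum_congr rfl hval]
    have hcup : (SofJ A K)ᶜ ∪ SofJ A K = Finset.univ := by
      ext s
      simp only [Finset.mem_union, Finset.mem_compl, Finset.mem_univ, iff_true]
      tauto
    have hint : (SofJ A K)ᶜ ∩ SofJ A K = (∅ : Finset S) := by
      ext s
      simp
    have := sum_Agr_marg μ hcup z
    rw [hint] at this
    rw [this, marg_empty hμ1]
  · have hval : ∀ w ∈ Agr (SofJ A K)ᶜ z,
        pker A μ K w = marg μ (SofJ A K ∪ Sring A K) w / marg μ (Sring A K) z := by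
      intro w hw
      rw [pker, if_neg (by rw [hagree w hw]; exact h0), hagree w hw]
    rw [Finset.sum_congr rfl hval, ← Finset.sum_div]
    have hcup : (SofJ A K)ᶜ ∪ (SofJ A K ∪ Sring A K) = Finset.univ := by
      ext s
      simp only [Finset.mem_union, Finset.mem_compl, Finset.mem_univ, iff_true]
      tauto
    have hint : (SofJ A K)ᶜ ∩ (SofJ A K ∪ Sring A K) = Sring A K := by
      ext s
      simp only [Finset.mem_inter, Finset.mem_compl, Finset.mem_union]
      constructor
      · rintro ⟨hn, h | h⟩
        · exact absurd h hn
        · exact h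
      · intro h
        exact ⟨not_mem_SofJ_of_mem_Sring h, Or.inr h⟩
    have := sum_Agr_marg μ hcup z
    rw [hint] at this
    rw [this]
    exact div_self h0

lemma pker_sumN {A : Finset (S × I)} (hμ1 : ∑ z, μ z = 1) :
    ∀ ℒ : Finset (Finset I), ∀ z : ∀ s, Z s,
      ∑ w ∈ Agr (Tset A ℒ)ᶜ z, ∏ J ∈ ℒ, pker A μ J w = 1 := by
  intro ℒ
  induction ℒ using Finset.strongInduction with
  | _ ℒ ih =>
    intro z
    rcases Finset.eq_empty_or_nonempty ℒ with rfl | hne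
    · have hT : Tset A (∅ : Finset (Finset I)) = ∅ := Finset.biUnion_empty
      rw [hT, Finset.compl_empty, Agr_univ, Finset.sum_singleton, Finset.prod_empty]
    · obtain ⟨K, hmin0⟩ := Finset.exists_minimal hne
      have hK : K ∈ ℒ := hmin0.prop
      have hmin : ∀ J ∈ ℒ, ¬ J ⊂ K := fun J hJ => hmin0.not_lt hJ
      have hT : Tset A ℒ = Tset A (ℒ.erase K) ∪ SofJ A K := by
        ext s
        simp only [Finset.mem_union, mem_Tset, mem_SofJ, Finset.mem_erase]
        constructor
        · intro h
          by_cases hc : IofF A s = K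
          · exact Or.inr hc
          · exact Or.inl ⟨hc, h⟩
        · rintro (⟨_, h⟩ | h)
          · exact h
          · rw [h]; exact hK
      have hdisj : Disjoint (Tset A (ℒ.erase K)) (SofJ A K) := by
        rw [Finset.disjoint_left]
        intro s hs hs'
        rw [mem_Tset] at hs
        rw [mem_SofJ] at hs'
        rw [hs'] at hs
        exact Finset.notMem_erase K ℒ hs
      rw [hT, sum_Agr_split hdisj]
      have hinner : ∀ w' ∈ Agr (Tset A (ℒ.erase K))ᶜ z,
          ∑ w ∈ Agr (SofJ A K)ᶜ w', ∏ J ∈ ℒ, pker A μ J w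
            = ∏ J ∈ ℒ.erase K, pker A μ J w' := by
        intro w' hw'
        have hterm : ∀ w ∈ Agr (SofJ A K)ᶜ w', ∏ J ∈ ℒ, pker A μ J w
            = pker A μ K w * ∏ J ∈ ℒ.erase K, pker A μ J w' := by
          intro w hw
          rw [← Finset.mul_prod_erase _ _ hK]
          congr 1
          refine Finset.prod_congr rfl fun J hJ => ?_
          refine pker_congr fun s hs => mem_Agr.1 hw s ?_
          rw [Finset.mem_compl, mem_SofJ]
          rw [Finset.mem_erase] at hJ
          rcases Finset.mem_union.1 hs with h | h
          · rw [mem_SofJ] at h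
            intro hc
            exact hJ.1 (h ▸ hc ▸ rfl)
          · rw [mem_Sring] at h
            intro hc
            rw [hc] at h
            exact hmin J hJ.2 h
        rw [Finset.sum_congr rfl hterm, ← Finset.sum_mul, pker_norm hμ1 A K w', one_mul]
      rw [Finset.sum_congr rfl hinner]
      exact ih _ (Finset.erase_ssubset hK) z

lemma mu_eq_prod {A : Finset (S × I)} (hμ0 : ∀ z, 0 ≤ μ z) (hμ1 : ∑ z, μ z = 1)
    (hF : ∀ z : ∀ s, Z s,
        μ z * ∏ J ∈ frak A, marg μ (Sring A J) z
          = ∏ J ∈ frak A, marg μ (SofJ A J ∪ Sring A J) z) :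
    ∀ z : ∀ s, Z s, μ z = ∏ J ∈ frak A, pker A μ J z := by
  have huniv : (Finset.univ : Finset (∀ s, Z s)).Nonempty := by
    by_contra h
    rw [Finset.not_nonempty_iff_eq_empty] at h
    rw [show (∑ z, μ z) = ∑ z ∈ Finset.univ, μ z from rfl, h, Finset.sum_empty] at hμ1
    exact one_ne_zero hμ1.symm
  obtain ⟨z0, _⟩ := huniv
  have hν1 : ∑ w, ∏ J ∈ frak A, pker A μ J w = 1 := by
    have h := pker_sumN (A := A) hμ1 (frak A) z0
    rw [Tset_frak, Finset.compl_univ, Agr_empty] at h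
    exact h
  have hle : ∀ z, μ z ≤ ∏ J ∈ frak A, pker A μ J z := by
    intro z
    by_cases hz : ∀ J ∈ frak A, marg μ (Sring A J) z ≠ 0
    · have hP : ∏ J ∈ frak A, marg μ (Sring A J) z ≠ 0 := Finset.prod_ne_zero_iff.2 hz
      have h := hF z
      have heq : ∏ J ∈ frak A, marg μ (SofJ A J ∪ Sring A J) z
          = (∏ J ∈ frak A, pker A μ J z) * ∏ J ∈ frak A, marg μ (Sring A J) z := by
        rw [← Finset.prod_mul_distrib]
        exact Finset.prod_congr rfl fun J _ => (pker_mul hμ0 A J z).symm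
      rw [heq] at h
      exact le_of_eq (mul_right_cancel₀ hP h)
    · push_neg at hz
      obtain ⟨J0, hJ0, h0⟩ := hz
      have hμz : μ z = 0 :=
        le_antisymm (by rw [← h0]; exact le_marg hμ0 _ z) (hμ0 z)
      rw [hμz]
      exact Finset.prod_nonneg fun J _ => pker_nonneg hμ0 A J z
  intro z
  have hsum : ∑ w, ((∏ J ∈ frak A, pker A μ J w) - μ w) = 0 := by
    rw [Finset.sum_sub_distrib, hν1, hμ1, sub_self]
  have h := (Finset.sum_eq_zero_iff_of_nonneg
    (fun w _ => sub_nonneg.2 (hle w))).1 hsum z (Finset.mem_univ z)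
  linarith

lemma margT_eq_prod {A : Finset (S × I)} (hμ0 : ∀ z, 0 ≤ μ z) (hμ1 : ∑ z, μ z = 1)
    (hF : ∀ z : ∀ s, Z s,
        μ z * ∏ J ∈ frak A, marg μ (Sring A J) z
          = ∏ J ∈ frak A, marg μ (SofJ A J ∪ Sring A J) z)
    {𝒦 : Finset (Finset I)} (hU : UpC A 𝒦) (z : ∀ s, Z s) :
    marg μ (Tset A 𝒦) z = ∏ J ∈ 𝒦, pker A μ J z := by
  have hμν := mu_eq_prod hμ0 hμ1 hF
  rw [marg_def]
  have h1 : ∀ w ∈ Agr (Tset A 𝒦) z,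
      μ w = (∏ J ∈ 𝒦, pker A μ J z) * ∏ J ∈ frak A \ 𝒦, pker A μ J w := by
    intro w hw
    rw [hμν w, ← Finset.prod_sdiff hU.1, mul_comm]
    congr 1
    refine Finset.prod_congr rfl fun J hJ => pker_congr fun s hs => ?_
    refine mem_Agr.1 hw s ?_
    rw [mem_Tset]
    rcases Finset.mem_union.1 hs with h | h
    · rw [mem_SofJ] at h
      rw [h]
      exact hJ
    · rw [mem_Sring] at h
      exact hU.2 J hJ _ (IofF_mem_frak A s) h
  rw [Finset.sum_congr rfl h1, ← Finset.mul_sum]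
  have hset : Tset A 𝒦 = (Tset A (frak A \ 𝒦))ᶜ := by
    ext s
    simp only [Finset.mem_compl, mem_Tset, Finset.mem_sdiff]
    constructor
    · intro h hc
      exact hc.2 h
    · intro h
      by_contra hc
      exact h ⟨IofF_mem_frak A s, hc⟩
  rw [hset, pker_sumN hμ1 _ z, mul_one]

lemma fact_imp_E {A : Finset (S × I)} (hμ0 : ∀ z, 0 ≤ μ z) (hμ1 : ∑ z, μ z = 1)
    (hF : ∀ z : ∀ s, Z s,
        μ z * ∏ J ∈ frak A, marg μ (Sring A J) z
          = ∏ J ∈ frak A, marg μ (SofJ A J ∪ Sring A J) z)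
    {𝒦 : Finset (Finset I)} (hU : UpC A 𝒦) (z : ∀ s, Z s) :
    marg μ (Tset A 𝒦) z * ∏ J ∈ 𝒦, marg μ (Sring A J) z
      = ∏ J ∈ 𝒦, marg μ (SofJ A J ∪ Sring A J) z := by
  rw [margT_eq_prod hμ0 hμ1 hF hU z, ← Finset.prod_mul_distrib]
  exact Finset.prod_congr rfl fun J _ => pker_mul hμ0 A J z

end Aux8

/-- Lemma 8 of the paper: the joint pmf μ of Z_𝒮 satisfies the Markov chains
Z_A ↔ Z_B ↔ Z_C for every ℐ' ∈ 𝔍 if and only if μ factorizes according to the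
access structure. -/
theorem stmt8 {S I : Type*} [Fintype S] [Fintype I] [DecidableEq S] [DecidableEq I]
    {Z : S → Type*} [∀ s, Fintype (Z s)]
    (A : Finset (S × I)) (μ : (∀ s, Z s) → ℝ)
    (hμ0 : ∀ z, 0 ≤ μ z) (hμ1 : ∑ z, μ z = 1) :
    (∀ J ∈ frak A, ∀ z : ∀ s, Z s,
        marg μ (Aset A J ∪ Bset A J ∪ SofJ A J) z * marg μ (Bset A J) z
          = marg μ (Aset A J ∪ Bset A J) z * marg μ (Bset A J ∪ SofJ A J) z)
      ↔ (∀ z : ∀ s, Z s,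
        μ z * ∏ J ∈ frak A, marg μ (Sring A J) z
          = ∏ J ∈ frak A, marg μ (SofJ A J ∪ Sring A J) z) := by
  constructor
  · intro hM z
    have h := markov_imp_fact hμ1 hM (frak A)
      ⟨Finset.Subset.refl _, fun J hJ J' hJ' _ => hJ'⟩ z
    rwa [Tset_frak, marg_univ] at h
  · intro hF K hKfrak z
    have hU1 : UpC A ((frak A).filter (fun J => ¬ J ⊆ K)) := by
      refine ⟨Finset.filter_subset _ _, ?_⟩
      intro J hJ J' hJ' hss
      rw [Finset.mem_filter] at hJ ⊢
      exact ⟨hJ', fun hc => hJ.2 (hss.subset.trans hc)⟩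
    have hU2 : UpC A ((frak A).filter (fun J => ¬ J ⊂ K)) := by
      refine ⟨Finset.filter_subset _ _, ?_⟩
      intro J hJ J' hJ' hss
      rw [Finset.mem_filter] at hJ ⊢
      exact ⟨hJ', fun hc => hJ.2 (hss.trans hc)⟩
    have hKnot : K ∉ (frak A).filter (fun J => ¬ J ⊆ K) := by
      simp [Finset.mem_filter]
    have hins : (frak A).filter (fun J => ¬ J ⊂ K)
        = insert K ((frak A).filter (fun J => ¬ J ⊆ K)) := by
      ext J
      simp only [Finset.mem_filter, Finset.mem_insert]
      constructor
      · rintro ⟨hf, hns⟩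
        by_cases hsub : J ⊆ K
        · left
          by_contra hne
          exact hns (Finset.ssubset_iff_subset_ne.2 ⟨hsub, hne⟩)
        · right
          exact ⟨hf, hsub⟩
      · rintro (rfl | ⟨hf, hns⟩)
        · exact ⟨hKfrak, fun h => ssubset_irrefl _ h⟩
        · exact ⟨hf, fun h => hns h.subset⟩
    have E2 := fact_imp_E hμ0 hμ1 hF hU2 z
    have E1 := fact_imp_E hμ0 hμ1 hF hU1 z
    rw [hins, Finset.prod_insert hKnot, Finset.prod_insert hKnot] at E2
    rw [← E1] at E2
    rw [← hins] at E2
    rw [ABCset_eq A K, ABset_eq A K, Bset_eq A K,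
      Finset.union_comm (Sring A K) (SofJ A K)]
    by_cases hP : ∏ J ∈ (frak A).filter (fun J => ¬ J ⊆ K), marg μ (Sring A J) z = 0
    · obtain ⟨J0, hJ0, h0⟩ := Finset.prod_eq_zero_iff.1 hP
      have hsub01 : Sring A J0 ⊆ Tset A ((frak A).filter (fun J => ¬ J ⊆ K)) :=
        Sring_subset_Tset hU1 hJ0
      have hsub12 : Tset A ((frak A).filter (fun J => ¬ J ⊆ K))
          ⊆ Tset A ((frak A).filter (fun J => ¬ J ⊂ K)) := by
        intro s hs
        rw [mem_Tset, Finset.mem_filter] at hs ⊢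
        exact ⟨hs.1, fun hc => hs.2 hc.subset⟩
      have hT1 : marg μ (Tset A ((frak A).filter (fun J => ¬ J ⊆ K))) z = 0 :=
        le_antisymm (by rw [← h0]; exact marg_mono hμ0 hsub01 z) (marg_nonneg hμ0 _ _)
      have hT2 : marg μ (Tset A ((frak A).filter (fun J => ¬ J ⊂ K))) z = 0 :=
        le_antisymm (hT1 ▸ marg_mono hμ0 hsub12 z) (marg_nonneg hμ0 _ _)
      rw [hT1, hT2, zero_mul, zero_mul]
    · refine mul_right_cancel₀ hP ?_
      linear_combination E2
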